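/- Let K^+ := {a ∈ Z(H) : t(a) = a}, the t-invariant part of the center of H, a commutative ℚ-subalgebra of H. Then K^+ is a product of totally real number fields: every ℚ-algebra homomorphism K^+ → ℂ has image contained in ℝ. -/

import Mathlib

open scoped TensorProduct

noncomputable section

/-- Complex conjugation on `ℂ` as a `ℚ`-algebra homomorphism. -/
def conjQAlg : ℂ →ₐ[ℚ] ℂ := (Complex.conjAe.restrictScalars ℚ).toAlgHom

variable (H : Type) [Ring H] [Algebra ℚ H] [FiniteDimensional ℚ H]

/-- The conjugate-linear involution of `H_ℂ = ℂ ⊗[ℚ] H` fixing `H`. -/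
def sigmaC : ℂ ⊗[ℚ] H →ₗ[ℚ] ℂ ⊗[ℚ] H :=
  (Algebra.TensorProduct.map conjQAlg (AlgHom.id ℚ H)).toLinearMap

/-- The inclusion of `H` into `H_ℂ = ℂ ⊗[ℚ] H`. -/
def inclH : H →ₐ[ℚ] ℂ ⊗[ℚ] H := Algebra.TensorProduct.includeRight

/-- The data of a polarized weight 2 Hodge structure on a finite-dimensional `ℚ`-algebra `H`,
compatible with the ring structure:
(i) a Hodge decomposition `H_ℂ = H^{2,0} ⊕ H^{1,1} ⊕ H^{0,2}` with `σ(H^{2,0}) = H^{0,2}`,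
`σ(H^{1,1}) = H^{1,1}`;
(ii) a polarization: a symmetric `ℚ`-bilinear form `B` on `H` with `ℂ`-bilinear extension `BC`
to `H_ℂ`, whose associated Hermitian pairing `h(α,β) := BC α (σ β)` makes the Hodge pieces
pairwise orthogonal and is positive definite on `H^{2,0}`, `H^{0,2}` and negative definite on
`H^{1,1}`;
(iii) the product is a morphism of Hodge structures of bidegree `(-1,-1)`:
`H^{p,q}·H^{p',q'} ⊆ H^{p+p'-1,q+q'-1}`;
(iv) an adjunction `t`: a `ℚ`-linear involution with `t(ab) = t(b)t(a)`,
`⟨ab,c⟩ = ⟨b, t(a)c⟩` and `⟨ab,c⟩ = ⟨a, c·t(b)⟩`. -/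
structure HodgeAlgebraData where
  H20 : Submodule ℂ (ℂ ⊗[ℚ] H)
  H11 : Submodule ℂ (ℂ ⊗[ℚ] H)
  H02 : Submodule ℂ (ℂ ⊗[ℚ] H)
  sup_top : H20 ⊔ H11 ⊔ H02 = ⊤
  disj1 : H20 ⊓ (H11 ⊔ H02) = ⊥
  disj2 : H11 ⊓ H02 = ⊥
  sigma_20 : ∀ x ∈ H20, sigmaC H x ∈ H02
  sigma_02 : ∀ x ∈ H02, sigmaC H x ∈ H20
  sigma_11 : ∀ x ∈ H11, sigmaC H x ∈ H11
  B : H →ₗ[ℚ] H →ₗ[ℚ] ℚ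
  B_symm : ∀ a b : H, B a b = B b a
  BC : (ℂ ⊗[ℚ] H) →ₗ[ℂ] (ℂ ⊗[ℚ] H) →ₗ[ℂ] ℂ
  BC_extends : ∀ a b : H, BC (inclH H a) (inclH H b) = (B a b : ℂ)
  BC_symm : ∀ x y, BC x y = BC y x
  BC_conj : ∀ x y, BC (sigmaC H x) (sigmaC H y) = starRingEnd ℂ (BC x y)
  orth_20_11 : ∀ x ∈ H20, ∀ y ∈ H11, BC x (sigmaC H y) = 0
  orth_20_02 : ∀ x ∈ H20, ∀ y ∈ H02, BC x (sigmaC H y) = 0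
  orth_11_02 : ∀ x ∈ H11, ∀ y ∈ H02, BC x (sigmaC H y) = 0
  pos_20 : ∀ x ∈ H20, x ≠ 0 → 0 < (BC x (sigmaC H x)).re ∧ (BC x (sigmaC H x)).im = 0
  pos_02 : ∀ x ∈ H02, x ≠ 0 → 0 < (BC x (sigmaC H x)).re ∧ (BC x (sigmaC H x)).im = 0
  neg_11 : ∀ x ∈ H11, x ≠ 0 → (BC x (sigmaC H x)).re < 0 ∧ (BC x (sigmaC H x)).im = 0
  mul_20_20 : ∀ x ∈ H20, ∀ y ∈ H20, x * y = 0
  mul_20_11 : ∀ x ∈ H20, ∀ y ∈ H11, x * y ∈ H20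
  mul_11_20 : ∀ x ∈ H11, ∀ y ∈ H20, x * y ∈ H20
  mul_11_11 : ∀ x ∈ H11, ∀ y ∈ H11, x * y ∈ H11
  mul_20_02 : ∀ x ∈ H20, ∀ y ∈ H02, x * y ∈ H11
  mul_02_20 : ∀ x ∈ H02, ∀ y ∈ H20, x * y ∈ H11
  mul_02_02 : ∀ x ∈ H02, ∀ y ∈ H02, x * y = 0
  mul_11_02 : ∀ x ∈ H11, ∀ y ∈ H02, x * y ∈ H02
  mul_02_11 : ∀ x ∈ H02, ∀ y ∈ H11, x * y ∈ H02
  t : H →ₗ[ℚ] H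
  t_invol : ∀ a : H, t (t a) = a
  t_mul : ∀ a b : H, t (a * b) = t b * t a
  adj_left : ∀ a b c : H, B (a * b) c = B b (t a * c)
  adj_right : ∀ a b c : H, B (a * b) c = B a (c * t b)

variable {H}

/-- `W := H^{2,0}·H_ℂ`, the `ℂ`-linear span of all products `x·y` with `x ∈ H^{2,0}`,
`y ∈ H_ℂ`. -/
def HodgeAlgebraData.W (D : HodgeAlgebraData H) : Submodule ℂ (ℂ ⊗[ℚ] H) := D.H20 * ⊤

/-- `σ(W)`, the image of `W` under the conjugation `σ`, as a `ℚ`-subspace of `H_ℂ`. -/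
def HodgeAlgebraData.sigmaW (D : HodgeAlgebraData H) : Submodule ℚ (ℂ ⊗[ℚ] H) :=
  (D.W.restrictScalars ℚ).map (sigmaC H)

/-- The `ℂ`-linear extension of `t` to `H_ℂ`. -/
def HodgeAlgebraData.tC (D : HodgeAlgebraData H) : ℂ ⊗[ℚ] H →ₗ[ℂ] ℂ ⊗[ℚ] H :=
  LinearMap.baseChange ℂ D.t

/-- `K⁺`, the `t`-invariant part of the center of `H`, as a subring of `H`. -/
def HodgeAlgebraData.Kplus (D : HodgeAlgebraData H) : Subring H where
  carrier := {a | (∀ b : H, a * b = b * a) ∧ D.t a = a}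
  zero_mem' := ⟨fun b => by simp, map_zero _⟩
  one_mem' := by
    refine ⟨fun b => by rw [one_mul, mul_one], ?_⟩
    have h : ∀ a : H, D.t a = D.t a * D.t 1 := fun a => by
      conv_lhs => rw [← one_mul a, D.t_mul]
    have h2 := h (D.t 1)
    rw [D.t_invol, one_mul] at h2
    exact h2.symm
  add_mem' := fun {a b} ha hb =>
    ⟨fun c => by rw [add_mul, mul_add, ha.1, hb.1], by rw [map_add, ha.2, hb.2]⟩
  neg_mem' := fun {a} ha =>
    ⟨fun c => by rw [neg_mul, mul_neg, ha.1], by rw [map_neg, ha.2]⟩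
  mul_mem' := fun {a b} ha hb =>
    ⟨fun c => by rw [mul_assoc, hb.1, ← mul_assoc, ha.1, mul_assoc],
     by rw [D.t_mul, ha.2, hb.2, hb.1]⟩


-- ## Auxiliary lemmas

section Aux

variable {H : Type} [Ring H] [Algebra ℚ H] [FiniteDimensional ℚ H]

lemma sigmaC_mul (x y : ℂ ⊗[ℚ] H) : sigmaC H (x * y) = sigmaC H x * sigmaC H y := by
  exact map_mul (Algebra.TensorProduct.map conjQAlg (AlgHom.id ℚ H)) x y

lemma sigmaC_incl (a : H) : sigmaC H (inclH H a) = inclH H a := by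
  simp [sigmaC, inclH, conjQAlg]

lemma sigmaC_smul (z : ℂ) (x : ℂ ⊗[ℚ] H) :
    sigmaC H (z • x) = (starRingEnd ℂ z) • sigmaC H x := by
  induction x using TensorProduct.induction_on with
  | zero => simp
  | tmul c h => rw [TensorProduct.smul_tmul']; simp [sigmaC, conjQAlg, TensorProduct.smul_tmul']
  | add u v hu hv => simp [smul_add, map_add, hu, hv]

lemma sigmaC_sigmaC (x : ℂ ⊗[ℚ] H) : sigmaC H (sigmaC H x) = x := by
  induction x using TensorProduct.induction_on with
  | zero => simp
  | tmul c h => simp [sigmaC, conjQAlg]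
  | add u v hu hv => simp [map_add, hu, hv]

lemma incl_central {a : H} (ha : ∀ b : H, a * b = b * a) (y : ℂ ⊗[ℚ] H) :
    inclH H a * y = y * inclH H a := by
  induction y using TensorProduct.induction_on with
  | zero => simp
  | tmul c h =>
      simp only [inclH, Algebra.TensorProduct.includeRight_apply,
        Algebra.TensorProduct.tmul_mul_tmul, one_mul, mul_one, ha]
  | add u v hu hv => rw [mul_add, add_mul, hu, hv]

namespace HodgeAlgebraData

variable (D : HodgeAlgebraData H)

lemma exists3 (v : ℂ ⊗[ℚ] H) :
    ∃ p q r, p ∈ D.H20 ∧ q ∈ D.H11 ∧ r ∈ D.H02 ∧ v = p + q + r := by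
  have hv : v ∈ D.H20 ⊔ D.H11 ⊔ D.H02 := by rw [D.sup_top]; trivial
  obtain ⟨y, hy, r, hr, hyr⟩ := Submodule.mem_sup.mp hv
  obtain ⟨p, hp, q, hq, hpq⟩ := Submodule.mem_sup.mp hy
  exact ⟨p, q, r, hp, hq, hr, by rw [← hyr, ← hpq]⟩

lemma unique3 {p q r : ℂ ⊗[ℚ] H} (hp : p ∈ D.H20) (hq : q ∈ D.H11) (hr : r ∈ D.H02)
    (h : p + q + r = 0) : p = 0 ∧ q = 0 ∧ r = 0 := by
  have hp0 : p = 0 := by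
    have hmem : p ∈ D.H20 ⊓ (D.H11 ⊔ D.H02) := by
      refine Submodule.mem_inf.mpr ⟨hp, ?_⟩
      have he : p = -(q + r) := by
        have : p + (q + r) = 0 := by rw [← add_assoc]; exact h
        exact eq_neg_of_add_eq_zero_left this
      rw [he]
      exact neg_mem (add_mem (Submodule.mem_sup_left hq) (Submodule.mem_sup_right hr))
    rw [D.disj1] at hmem
    exact (Submodule.mem_bot _).mp hmem
  have hq0 : q = 0 := by
    have hmem : q ∈ D.H11 ⊓ D.H02 := by
      refine Submodule.mem_inf.mpr ⟨hq, ?_⟩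
      have he : q = -r := by
        have : q + r = 0 := by
          have := h; rw [hp0, zero_add] at this; exact this
        exact eq_neg_of_add_eq_zero_left this
      rw [he]; exact neg_mem hr
    rw [D.disj2] at hmem
    exact (Submodule.mem_bot _).mp hmem
  refine ⟨hp0, hq0, ?_⟩
  have := h; rw [hp0, hq0, zero_add, zero_add] at this; exact this

lemma BC_zero_20_11 {x y : ℂ ⊗[ℚ] H} (hx : x ∈ D.H20) (hy : y ∈ D.H11) : D.BC x y = 0 := by
  have := D.orth_20_11 x hx (sigmaC H y) (D.sigma_11 y hy)
  rwa [sigmaC_sigmaC] at this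

lemma BC_zero_11_20 {x y : ℂ ⊗[ℚ] H} (hx : x ∈ D.H11) (hy : y ∈ D.H20) : D.BC x y = 0 := by
  rw [D.BC_symm]; exact D.BC_zero_20_11 hy hx

lemma BC_zero_11_02 {x y : ℂ ⊗[ℚ] H} (hx : x ∈ D.H11) (hy : y ∈ D.H02) : D.BC x y = 0 := by
  have h1 : D.BC (sigmaC H x) (sigmaC H y) = 0 :=
    D.BC_zero_11_20 (D.sigma_11 x hx) (D.sigma_02 y hy)
  rw [D.BC_conj] at h1
  exact star_eq_zero.mp h1

lemma BC_zero_02_11 {x y : ℂ ⊗[ℚ] H} (hx : x ∈ D.H02) (hy : y ∈ D.H11) : D.BC x y = 0 := by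
  rw [D.BC_symm]; exact D.BC_zero_11_02 hy hx

lemma BCadj {a : H} (ht : D.t a = a) (x y : ℂ ⊗[ℚ] H) :
    D.BC (inclH H a * x) y = D.BC x (inclH H a * y) := by
  have key : ∀ (c : ℂ) (b : H), inclH H a * (c ⊗ₜ[ℚ] b) = c • inclH H (a * b) := by
    intro c b
    simp only [inclH, Algebra.TensorProduct.includeRight_apply,
      Algebra.TensorProduct.tmul_mul_tmul, one_mul, TensorProduct.smul_tmul',
      smul_eq_mul, mul_one]
  have key2 : ∀ (c : ℂ) (b : H), (c ⊗ₜ[ℚ] b : ℂ ⊗[ℚ] H) = c • inclH H b := by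
    intro c b
    simp only [inclH, Algebra.TensorProduct.includeRight_apply, TensorProduct.smul_tmul',
      smul_eq_mul, mul_one]
  induction x using TensorProduct.induction_on with
  | zero => simp
  | tmul cx bx =>
      induction y using TensorProduct.induction_on with
      | zero => simp
      | tmul cy bb =>
          rw [key cx bx, key cy bb, key2 cy bb, key2 cx bx]
          simp only [map_smul, LinearMap.smul_apply, smul_eq_mul, D.BC_extends]
          rw [D.adj_left, ht]
      | add u v hu hv => simp only [mul_add, map_add, hu, hv]
  | add u v hu hv => simp only [mul_add, map_add, LinearMap.add_apply, hu, hv]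

section Components

variable {a : H} {a2 a0 an : ℂ ⊗[ℚ] H}

lemma comm_pieces (ha : ∀ b : H, a * b = b * a) (h2 : a2 ∈ D.H20) (h0 : a0 ∈ D.H11)
    (hn : an ∈ D.H02) (hsum : inclH H a = a2 + a0 + an) :
    (∀ y, a0 * y = y * a0) ∧ a2 * an = an * a2 := by
  have c20 : ∀ u ∈ D.H20, a0 * u = u * a0 ∧ an * u = u * an := by
    intro u hu
    have hc : (a2 + a0 + an) * u = u * (a2 + a0 + an) := by
      rw [← hsum]; exact incl_central ha u
    rw [add_mul, add_mul, mul_add, mul_add, D.mul_20_20 _ h2 _ hu, D.mul_20_20 _ hu _ h2,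
      zero_add, zero_add] at hc
    have hsum0 : (a0 * u - u * a0) + (an * u - u * an) + 0 = 0 := by
      rw [add_zero, sub_add_sub_comm, hc, sub_self]
    obtain ⟨e1, e2, -⟩ := D.unique3
      (sub_mem (D.mul_11_20 _ h0 _ hu) (D.mul_20_11 _ hu _ h0))
      (sub_mem (D.mul_02_20 _ hn _ hu) (D.mul_20_02 _ hu _ hn)) (zero_mem _) hsum0
    exact ⟨sub_eq_zero.mp e1, sub_eq_zero.mp e2⟩
  have c11 : ∀ u ∈ D.H11, a2 * u = u * a2 ∧ a0 * u = u * a0 ∧ an * u = u * an := by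
    intro u hu
    have hc : (a2 + a0 + an) * u = u * (a2 + a0 + an) := by
      rw [← hsum]; exact incl_central ha u
    rw [add_mul, add_mul, mul_add, mul_add] at hc
    have hsum0 : (a2 * u - u * a2) + (a0 * u - u * a0) + (an * u - u * an) = 0 := by
      rw [sub_add_sub_comm, sub_add_sub_comm, hc, sub_self]
    obtain ⟨e1, e2, e3⟩ := D.unique3
      (sub_mem (D.mul_20_11 _ h2 _ hu) (D.mul_11_20 _ hu _ h2))
      (sub_mem (D.mul_11_11 _ h0 _ hu) (D.mul_11_11 _ hu _ h0))
      (sub_mem (D.mul_02_11 _ hn _ hu) (D.mul_11_02 _ hu _ hn)) hsum0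
    exact ⟨sub_eq_zero.mp e1, sub_eq_zero.mp e2, sub_eq_zero.mp e3⟩
  have c02 : ∀ u ∈ D.H02, a2 * u = u * a2 ∧ a0 * u = u * a0 := by
    intro u hu
    have hc : (a2 + a0 + an) * u = u * (a2 + a0 + an) := by
      rw [← hsum]; exact incl_central ha u
    rw [add_mul, add_mul, mul_add, mul_add, D.mul_02_02 _ hn _ hu, D.mul_02_02 _ hu _ hn,
      add_zero, add_zero] at hc
    have hsum0 : (0 : ℂ ⊗[ℚ] H) + (a2 * u - u * a2) + (a0 * u - u * a0) = 0 := by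
      rw [zero_add, sub_add_sub_comm, hc, sub_self]
    obtain ⟨-, e2, e3⟩ := D.unique3 (zero_mem _)
      (sub_mem (D.mul_20_02 _ h2 _ hu) (D.mul_02_20 _ hu _ h2))
      (sub_mem (D.mul_11_02 _ h0 _ hu) (D.mul_02_11 _ hu _ h0)) hsum0
    exact ⟨sub_eq_zero.mp e2, sub_eq_zero.mp e3⟩
  constructor
  · intro y
    obtain ⟨p, q, r, hp, hq, hr, hy⟩ := D.exists3 y
    rw [hy, mul_add, mul_add, add_mul, add_mul,
      (c20 p hp).1, (c11 q hq).2.1, (c02 r hr).2]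
  · exact (c02 an hn).1

lemma selfadj20 (ht : D.t a = a) (h2 : a2 ∈ D.H20) (h0 : a0 ∈ D.H11) (hn : an ∈ D.H02)
    (hsum : inclH H a = a2 + a0 + an) {u : ℂ ⊗[ℚ] H} (hu : u ∈ D.H20) :
    D.BC (a0 * u) (sigmaC H u) = D.BC u (sigmaC H (a0 * u)) := by
  have ea : inclH H a * u = a2 * u + (a0 * u + an * u) := by rw [hsum, add_mul, add_mul, add_assoc]
  have h2u : a2 * u = 0 := D.mul_20_20 _ h2 _ hu
  rw [h2u, zero_add] at ea
  have lhs1 : D.BC (inclH H a * u) (sigmaC H u) = D.BC (a0 * u) (sigmaC H u) := by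
    rw [ea, map_add, LinearMap.add_apply,
      D.BC_zero_11_02 (D.mul_02_20 _ hn _ hu) (D.sigma_20 _ hu), add_zero]
  have rhs1 : D.BC u (sigmaC H (inclH H a * u)) = D.BC u (sigmaC H (a0 * u)) := by
    rw [ea, map_add, map_add,
      D.BC_zero_20_11 hu (D.sigma_11 _ (D.mul_02_20 _ hn _ hu)), add_zero]
  have e5 : sigmaC H (inclH H a * u) = inclH H a * sigmaC H u := by
    rw [sigmaC_mul, sigmaC_incl]
  have mid : D.BC (inclH H a * u) (sigmaC H u) = D.BC u (sigmaC H (inclH H a * u)) := by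
    rw [e5]; exact D.BCadj ht u (sigmaC H u)
  rw [← lhs1, mid, rhs1]

lemma selfadj11 (ht : D.t a = a) (h2 : a2 ∈ D.H20) (h0 : a0 ∈ D.H11) (hn : an ∈ D.H02)
    (hsum : inclH H a = a2 + a0 + an) {u : ℂ ⊗[ℚ] H} (hu : u ∈ D.H11) :
    D.BC (a0 * u) (sigmaC H u) = D.BC u (sigmaC H (a0 * u)) := by
  have ea : inclH H a * u = a2 * u + a0 * u + an * u := by rw [hsum, add_mul, add_mul]
  have lhs1 : D.BC (inclH H a * u) (sigmaC H u) = D.BC (a0 * u) (sigmaC H u) := by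
    rw [ea, map_add, map_add, LinearMap.add_apply, LinearMap.add_apply,
      D.BC_zero_20_11 (D.mul_20_11 _ h2 _ hu) (D.sigma_11 _ hu),
      D.BC_zero_02_11 (D.mul_02_11 _ hn _ hu) (D.sigma_11 _ hu), zero_add, add_zero]
  have rhs1 : D.BC u (sigmaC H (inclH H a * u)) = D.BC u (sigmaC H (a0 * u)) := by
    rw [ea, map_add, map_add, map_add, map_add,
      D.BC_zero_11_02 hu (D.sigma_20 _ (D.mul_20_11 _ h2 _ hu)),
      D.BC_zero_11_20 hu (D.sigma_02 _ (D.mul_02_11 _ hn _ hu)), zero_add, add_zero]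
  have e5 : sigmaC H (inclH H a * u) = inclH H a * sigmaC H u := by
    rw [sigmaC_mul, sigmaC_incl]
  have mid : D.BC (inclH H a * u) (sigmaC H u) = D.BC u (sigmaC H (inclH H a * u)) := by
    rw [e5]; exact D.BCadj ht u (sigmaC H u)
  rw [← lhs1, mid, rhs1]

lemma selfadj02 (ht : D.t a = a) (h2 : a2 ∈ D.H20) (h0 : a0 ∈ D.H11) (hn : an ∈ D.H02)
    (hsum : inclH H a = a2 + a0 + an) {u : ℂ ⊗[ℚ] H} (hu : u ∈ D.H02) :
    D.BC (a0 * u) (sigmaC H u) = D.BC u (sigmaC H (a0 * u)) := by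
  have ea : inclH H a * u = a2 * u + (a0 * u + an * u) := by rw [hsum, add_mul, add_mul, add_assoc]
  have hnu : an * u = 0 := D.mul_02_02 _ hn _ hu
  rw [hnu, add_zero] at ea
  have lhs1 : D.BC (inclH H a * u) (sigmaC H u) = D.BC (a0 * u) (sigmaC H u) := by
    rw [ea, map_add, LinearMap.add_apply,
      D.BC_zero_11_20 (D.mul_20_02 _ h2 _ hu) (D.sigma_02 _ hu), zero_add]
  have rhs1 : D.BC u (sigmaC H (inclH H a * u)) = D.BC u (sigmaC H (a0 * u)) := by
    rw [ea, map_add, map_add,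
      D.BC_zero_02_11 hu (D.sigma_11 _ (D.mul_20_02 _ h2 _ hu)), zero_add]
  have e5 : sigmaC H (inclH H a * u) = inclH H a * sigmaC H u := by
    rw [sigmaC_mul, sigmaC_incl]
  have mid : D.BC (inclH H a * u) (sigmaC H u) = D.BC u (sigmaC H (inclH H a * u)) := by
    rw [e5]; exact D.BCadj ht u (sigmaC H u)
  rw [← lhs1, mid, rhs1]

lemma a0inj (ht : D.t a = a) (h2 : a2 ∈ D.H20) (h0 : a0 ∈ D.H11) (hn : an ∈ D.H02)
    (hsum : inclH H a = a2 + a0 + an) {z : ℂ} (hz : starRingEnd ℂ z ≠ z) :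
    ∀ y, a0 * y = z • y → y = 0 := by
  intro y hy
  obtain ⟨p, q, r, hp, hq, hr, hdecomp⟩ := D.exists3 y
  have hsum0 : (a0 * p - z • p) + (a0 * q - z • q) + (a0 * r - z • r) = 0 := by
    rw [sub_add_sub_comm, sub_add_sub_comm, ← mul_add, ← mul_add, ← smul_add, ← smul_add,
      ← hdecomp, hy, sub_self]
  obtain ⟨e1, e2, e3⟩ := D.unique3
    (sub_mem (D.mul_11_20 _ h0 _ hp) (Submodule.smul_mem _ z hp))
    (sub_mem (D.mul_11_11 _ h0 _ hq) (Submodule.smul_mem _ z hq))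
    (sub_mem (D.mul_11_02 _ h0 _ hr) (Submodule.smul_mem _ z hr)) hsum0
  have hp' : a0 * p = z • p := sub_eq_zero.mp e1
  have hq' : a0 * q = z • q := sub_eq_zero.mp e2
  have hr' : a0 * r = z • r := sub_eq_zero.mp e3
  have key : ∀ w : ℂ ⊗[ℚ] H, a0 * w = z • w →
      D.BC (a0 * w) (sigmaC H w) = D.BC w (sigmaC H (a0 * w)) →
      D.BC w (sigmaC H w) = 0 := by
    intro w hw hsa
    rw [hw, map_smul, LinearMap.smul_apply, sigmaC_smul, map_smul, smul_eq_mul,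
      smul_eq_mul] at hsa
    by_contra hne
    exact hz (mul_right_cancel₀ hne hsa).symm
  have hp0 : p = 0 := by
    by_contra hne
    have := key p hp' (D.selfadj20 ht h2 h0 hn hsum hp)
    have hpos := (D.pos_20 p hp hne).1
    rw [this] at hpos
    simp at hpos
  have hq0 : q = 0 := by
    by_contra hne
    have := key q hq' (D.selfadj11 ht h2 h0 hn hsum hq)
    have hpos := (D.neg_11 q hq hne).1
    rw [this] at hpos
    simp at hpos
  have hr0 : r = 0 := by
    by_contra hne
    have := key r hr' (D.selfadj02 ht h2 h0 hn hsum hr)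
    have hpos := (D.pos_02 r hr hne).1
    rw [this] at hpos
    simp at hpos
  rw [hdecomp, hp0, hq0, hr0, add_zero, add_zero]

end Components

/-- The key spectral statement: for `a` central and `t`-fixed and `z` non-real, left
multiplication by `inclH a - z • 1` is injective on `H_ℂ`. -/
lemma b_inj {a : H} (ha : ∀ b : H, a * b = b * a) (ht : D.t a = a) {z : ℂ}
    (hz : starRingEnd ℂ z ≠ z) :
    ∀ y : ℂ ⊗[ℚ] H, (inclH H a - z • 1) * y = 0 → y = 0 := by
  obtain ⟨a2, a0, an, h2, h0, hn, hsum⟩ := D.exists3 (inclH H a)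
  obtain ⟨hcen, hc2n⟩ := D.comm_pieces ha h2 h0 hn hsum
  have h22 : a2 * a2 = 0 := D.mul_20_20 _ h2 _ h2
  have hnn : an * an = 0 := D.mul_02_02 _ hn _ hn
  set c : ℂ ⊗[ℚ] H := a0 - z • 1 with hcdef
  set N : ℂ ⊗[ℚ] H := a2 + an with hNdef
  -- injectivity of multiplication by c
  have hcinj : ∀ w, c * w = 0 → w = 0 := by
    intro w hw
    refine D.a0inj ht h2 h0 hn hsum hz w ?_
    have : a0 * w - z • w = 0 := by
      rw [hcdef, sub_mul, smul_mul_assoc, one_mul] at hw; exact hw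
    exact sub_eq_zero.mp this
  -- c has a left inverse obtained from surjectivity
  have hcInj : Function.Injective (LinearMap.mulLeft ℂ c) := by
    intro w1 w2 hw
    simp only [LinearMap.mulLeft_apply] at hw
    have := hcinj (w1 - w2) (by rw [mul_sub, hw, sub_self])
    exact sub_eq_zero.mp this
  obtain ⟨u, hu⟩ := LinearMap.surjective_of_injective hcInj 1
  rw [LinearMap.mulLeft_apply] at hu
  have huc : u * c = 1 := by
    have h5 : c * (u * c - 1) = 0 := by
      rw [mul_sub, ← mul_assoc, hu, one_mul, mul_one, sub_self]
    exact sub_eq_zero.mp (hcinj _ h5)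
  -- N is central
  have hNc : ∀ w, N * w = w * N := by
    intro w
    have e : N = inclH H a - a0 := by rw [hNdef, hsum]; abel
    rw [e, sub_mul, mul_sub, incl_central ha, hcen]
  -- N is nilpotent of order 4
  have hss : (a2 * an) * (a2 * an) = 0 := by
    rw [mul_assoc, ← mul_assoc an a2 an, ← hc2n, mul_assoc, hnn, mul_zero, mul_zero]
  have hNN : N * N = a2 * an + a2 * an := by
    rw [hNdef, add_mul, mul_add, mul_add, h22, hnn, zero_add, add_zero, ← hc2n]
  have hN4 : N * (N * (N * N)) = 0 := by
    rw [← mul_assoc, hNN]; simp [add_mul, mul_add, hss]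
  -- decomposition of b
  have hbN : inclH H a - z • 1 = c + N := by rw [hcdef, hNdef, hsum]; abel
  -- the kernel of b is stable under N
  have hker : ∀ w, (inclH H a - z • 1) * w = 0 → (inclH H a - z • 1) * (N * w) = 0 := by
    intro w hw
    have hNb : N * (inclH H a - z • 1) = (inclH H a - z • 1) * N := (hNc _).symm ▸ rfl
    have : (inclH H a - z • 1) * (N * w) = N * ((inclH H a - z • 1) * w) := by
      rw [← mul_assoc, ← hNc, mul_assoc]
    rw [this, hw, mul_zero]
  -- the recursion step
  have hstep : ∀ w, (inclH H a - z • 1) * w = 0 → w = -(u * (N * w)) := by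
    intro w hw
    rw [hbN, add_mul] at hw
    have h6 : c * w = -(N * w) := eq_neg_of_add_eq_zero_left hw
    have h7 : u * (c * w) = u * (-(N * w)) := by rw [h6]
    rw [← mul_assoc, huc, one_mul, mul_neg] at h7
    exact h7
  intro y hy0
  have hy1 := hker y hy0
  have hy2 := hker _ hy1
  have hy3 := hker _ hy2
  have e4 : N * (N * (N * (N * y))) = 0 := by
    have hN4' : ((N * N) * N) * N = 0 := by
      rw [mul_assoc, mul_assoc]; exact hN4
    calc N * (N * (N * (N * y))) = (((N * N) * N) * N) * y := by
          rw [mul_assoc, mul_assoc, mul_assoc]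
      _ = 0 := by rw [hN4', zero_mul]
  have e3 : N * (N * (N * y)) = 0 := by
    have := hstep _ hy3
    rw [e4, mul_zero, neg_zero] at this; exact this
  have e2 : N * (N * y) = 0 := by
    have := hstep _ hy2
    rw [e3, mul_zero, neg_zero] at this; exact this
  have e1 : N * y = 0 := by
    have := hstep _ hy1
    rw [e2, mul_zero, neg_zero] at this; exact this
  have := hstep y hy0
  rw [e1, mul_zero, neg_zero] at this; exact this

/-- `K⁺` as a `ℚ`-subalgebra. -/
def KplusAlg : Subalgebra ℚ H :=
  { D.Kplus.toSubsemiring with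
    algebraMap_mem' := fun q => by
      refine ⟨fun b => Algebra.commutes q b, ?_⟩
      have h1 : (1 : H) ∈ D.Kplus := D.Kplus.one_mem
      have ht1 : D.t 1 = 1 := h1.2
      rw [Algebra.algebraMap_eq_smul_one, map_smul, ht1] }

lemma mem_KplusAlg_iff {y : H} : y ∈ D.KplusAlg ↔ y ∈ D.Kplus := Iff.rfl

/-- The ring homomorphism from `KplusAlg` to `Kplus` (they have the same carrier). -/
def toK : D.KplusAlg →+* D.Kplus where
  toFun y := ⟨y.1, y.2⟩
  map_one' := rfl
  map_mul' _ _ := rfl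
  map_zero' := rfl
  map_add' _ _ := rfl

end HodgeAlgebraData

end Aux

set_option maxHeartbeats 2000000 in
set_option synthInstance.maxHeartbeats 400000 in
/-- `K⁺`, the `t`-invariant part of the center of `H`, is a product of
totally real number fields: every (`ℚ`-algebra) homomorphism `K⁺ → ℂ` has image contained
in `ℝ`. -/
theorem Kplus_totally_real (D : HodgeAlgebraData H) :
    ∀ (φ : D.Kplus →+* ℂ) (x : D.Kplus), (φ x).im = 0 := by
  intro φ x
  by_contra hzim
  set z : ℂ := φ x with hzdef
  have hxc : ∀ b : H, (x : H) * b = b * (x : H) := x.2.1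
  have hxt : D.t (x : H) = (x : H) := x.2.2
  have hz : starRingEnd ℂ z ≠ z := fun h => hzim (Complex.conj_eq_iff_im.mp h)
  have hbinj := D.b_inj hxc hxt hz
  haveI : FiniteDimensional ℚ (D.KplusAlg) :=
    FiniteDimensional.of_injective (D.KplusAlg).val.toLinearMap Subtype.val_injective
  set φ' : D.KplusAlg →ₐ[ℚ] ℂ := (φ.comp D.toK).toRatAlgHom with hφ'
  set ψ : ℂ ⊗[ℚ] D.KplusAlg →ₐ[ℚ] ℂ :=
    Algebra.TensorProduct.productMap (AlgHom.id ℚ ℂ) φ' with hψ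
  set j : ℂ ⊗[ℚ] D.KplusAlg →ₐ[ℚ] ℂ ⊗[ℚ] H :=
    Algebra.TensorProduct.map (AlgHom.id ℚ ℂ) (D.KplusAlg).val with hj
  obtain ⟨g, hg⟩ := (D.KplusAlg).val.toLinearMap.exists_leftInverse_of_injective
    (by rw [LinearMap.ker_eq_bot]; exact Subtype.val_injective)
  have hjinv : ∀ w, TensorProduct.map (LinearMap.id : ℂ →ₗ[ℚ] ℂ) g (j w) = w := by
    intro w
    induction w using TensorProduct.induction_on with
    | zero => simp
    | tmul cc k =>
        have h1 : j (cc ⊗ₜ k) = cc ⊗ₜ (k : H) := by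
          simp [hj, Algebra.TensorProduct.map_tmul]
        rw [h1, TensorProduct.map_tmul]
        congr 1
        exact DFunLike.congr_fun hg k
    | add u v hu hv => rw [map_add, map_add, hu, hv]
  have hjinj : Function.Injective j := fun w1 w2 h => by
    rw [← hjinv w1, h, hjinv w2]
  set xK : D.KplusAlg := ⟨(x : H), x.2⟩ with hxK
  set uu : ℂ ⊗[ℚ] D.KplusAlg := (1 : ℂ) ⊗ₜ[ℚ] xK - z ⊗ₜ[ℚ] (1 : D.KplusAlg) with huu
  have hsm : (z ⊗ₜ[ℚ] (1 : H) : ℂ ⊗[ℚ] H) = z • 1 := by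
    rw [Algebra.TensorProduct.one_def, TensorProduct.smul_tmul', smul_eq_mul, mul_one]
  have hju : j uu = inclH H (x : H) - z • 1 := by
    rw [huu, map_sub]
    have h1 : j ((1:ℂ) ⊗ₜ xK) = (1:ℂ) ⊗ₜ ((x : H)) := by simp [hj, hxK]
    have h2 : j (z ⊗ₜ (1 : D.KplusAlg)) = z ⊗ₜ (1 : H) := by simp [hj]
    rw [h1, h2, hsm]
    rfl
  have huinj : ∀ w, uu * w = 0 → w = 0 := by
    intro w hw
    have h1 : j uu * j w = 0 := by rw [← map_mul, hw, map_zero]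
    have h2 : j w = 0 := hbinj _ (by rw [← hju]; exact h1)
    exact hjinj (a₁ := w) (a₂ := 0) (by rw [h2, map_zero])
  haveI hfinC : Module.Finite ℂ (ℂ ⊗[ℚ] D.KplusAlg) := inferInstance
  have hsurj : Function.Surjective (LinearMap.mulLeft ℂ uu) :=
    LinearMap.surjective_of_injective (fun w1 w2 h => by
      simp only [LinearMap.mulLeft_apply] at h
      exact sub_eq_zero.mp (huinj (w1 - w2) (by rw [mul_sub, h, sub_self])))
  obtain ⟨v, hv⟩ := hsurj 1
  rw [LinearMap.mulLeft_apply] at hv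
  have hpsi : ψ uu = 0 := by
    rw [huu, map_sub, hψ]
    rw [Algebra.TensorProduct.productMap_apply_tmul, Algebra.TensorProduct.productMap_apply_tmul]
    have h1 : φ' xK = z := by
      rw [hφ']
      show φ (D.toK xK) = z
      rw [hzdef]
      congr 1
    simp [h1]
  have hone : (1 : ℂ) = 0 := by
    have h1 : ψ (uu * v) = 1 := by rw [hv, map_one]
    rw [map_mul, hpsi, zero_mul] at h1
    exact h1.symm
  exact one_ne_zero hone
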